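/- For the coefficients c_n = −1/(n 2^n) + (−1)^{n+1} 2^n B_{n+1}(5/4)/(n(n+1)), one has c_n = −a_{n+1}/n where a_{2n+1} = (8 − E_{2n})/2^{2n+2} and a_{2n} = (1 − 2^{1−2n}) B_{2n}/(4n); in particular c_1 = −1/48, c_2 = −9/32, c_3 = 7/5760, c_4 = −3/256. -/

import Mathlib

open scoped Nat

/-- The Euler numbers `E n`, defined by the generating function
`2 e^t / (e^{2t} + 1) = ∑ E n t^n / n!`. -/
noncomputable def eulerNumber (n : ℕ) : ℚ :=
  (n ! : ℚ) * (PowerSeries.coeff n)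
    (2 * PowerSeries.exp ℚ * (PowerSeries.rescale 2 (PowerSeries.exp ℚ) + 1)⁻¹)

/-- The coefficients `a_n`: `a_{2m+1} = (8 - E_{2m})/2^{2m+2}` and
`a_{2m} = (1 - 2^{1-2m}) B_{2m}/(4m)`. -/
noncomputable def aCoeff (n : ℕ) : ℚ :=
  if Even n then (1 - 2 ^ (1 - (n : ℤ))) * bernoulli n / (2 * n)
  else (8 - eulerNumber (n - 1)) / 2 ^ (n + 1)

/-- The coefficients `c_n = -1/(n 2^n) + (-1)^{n+1} 2^n B_{n+1}(5/4)/(n(n+1))`. -/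
noncomputable def cCoeff (n : ℕ) : ℚ :=
  -1 / (n * 2 ^ n) +
    (-1) ^ (n + 1) * 2 ^ n * (Polynomial.bernoulli (n + 1)).eval (5 / 4 : ℚ) / (n * (n + 1))

open PowerSeries

noncomputable def Eser : ℚ⟦X⟧ :=
  2 * PowerSeries.exp ℚ * (PowerSeries.rescale 2 (PowerSeries.exp ℚ) + 1)⁻¹

lemma coeff_Eser (n : ℕ) : coeff (R := ℚ) n Eser = eulerNumber n / n ! := by
  have h : ((n ! : ℚ)) ≠ 0 := by exact_mod_cast n.factorial_ne_zero
  rw [eulerNumber, mul_div_cancel_left₀ _ h]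
  rfl

lemma constCoeff_den : constantCoeff (R := ℚ) (rescale 2 (exp ℚ) + 1) = 2 := by
  have : constantCoeff (R := ℚ) (rescale (2:ℚ) (exp ℚ)) = 1 := by
    rw [← coeff_zero_eq_constantCoeff_apply, coeff_rescale, coeff_exp]
    norm_num
  rw [map_add, this, map_one]; norm_num

lemma den_ne : (rescale (2:ℚ) (exp ℚ) + 1) ≠ 0 := by
  intro h
  have := congrArg (constantCoeff (R := ℚ)) h
  rw [constCoeff_den] at this
  simp at this

lemma hG : Eser * (rescale 2 (exp ℚ) + 1) = 2 * exp ℚ := by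
  rw [Eser, mul_assoc, PowerSeries.inv_mul_cancel _ (by rw [constCoeff_den]; norm_num), mul_one]

lemma rexp1 : rescale (1:ℚ) (exp ℚ) = exp ℚ := by rw [rescale_one]; rfl

lemma r00 : rescale (0:ℚ) (exp ℚ) = 1 := by
  rw [rescale_zero]
  simp [constantCoeff_exp]

lemma exp_ne : exp ℚ - 1 ≠ 0 := by
  intro h
  have := congrArg (coeff (R := ℚ) 1) h
  simp [coeff_exp] at this

lemma Eser_neg : rescale (-1 : ℚ) Eser = Eser := by
  have h := congrArg (rescale (-1:ℚ)) hG
  simp only [map_mul, map_add, map_one, rescale_rescale, map_ofNat] at h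
  norm_num at h
  -- h : rescale (-1) Eser * (rescale (-2) (exp ℚ) + 1) = 2 * rescale (-1) (exp ℚ)
  apply mul_right_cancel₀ den_ne
  have key : rescale (-1:ℚ) Eser * ((rescale (-2:ℚ) (exp ℚ) + 1) * rescale (2:ℚ) (exp ℚ))
      = (2 * rescale (-1:ℚ) (exp ℚ)) * rescale (2:ℚ) (exp ℚ) := by
    rw [← mul_assoc, h]
  rw [add_mul, exp_mul_exp_eq_exp_add, one_mul] at key
  norm_num [r00] at key
  rw [mul_assoc, exp_mul_exp_eq_exp_add] at key
  norm_num [rexp1] at key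
  rw [hG]
  rw [← key]
  ring


noncomputable def Bs (t : ℚ) : ℚ⟦X⟧ :=
  PowerSeries.mk fun n => Polynomial.aeval t ((1 / n ! : ℚ) • Polynomial.bernoulli n)

lemma hB (t : ℚ) : Bs t * (exp ℚ - 1) = X * rescale t (exp ℚ) :=
  Polynomial.bernoulli_generating_function t

lemma coeff_Bs (t : ℚ) (n : ℕ) :
    coeff (R := ℚ) n (Bs t) = (Polynomial.bernoulli n).eval t / n ! := by
  simp [Bs, map_smul, smul_eq_mul]
  ring

lemma hu : rescale (1/2:ℚ) (exp ℚ) * rescale (1/2:ℚ) (exp ℚ) = exp ℚ := by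
  rw [exp_mul_exp_eq_exp_add]; norm_num [rexp1]

lemma hB0 : Bs 0 * (exp ℚ - 1) = X := by
  rw [hB 0, r00, mul_one]

lemma hc2 : (C (1/2:ℚ)) * 2 = 1 := by
  rw [show (2:ℚ⟦X⟧) = C (2:ℚ) from (map_ofNat _ 2).symm, ← map_mul]
  norm_num

lemma hc4 : (C (1/4:ℚ)) * 4 = 1 := by
  rw [show (4:ℚ⟦X⟧) = C (4:ℚ) from (map_ofNat _ 4).symm, ← map_mul]
  norm_num

lemma hcc : C (1/2:ℚ) = 2 * C (1/4:ℚ) := by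
  rw [show (2:ℚ⟦X⟧) = C (2:ℚ) from (map_ofNat _ 2).symm, ← map_mul]
  norm_num

lemma key2 : Bs (1/2) = 2 * rescale (1/2:ℚ) (Bs 0) - Bs 0 := by
  apply mul_right_cancel₀ exp_ne
  have hr : rescale (1/2:ℚ) (Bs 0) * (rescale (1/2:ℚ) (exp ℚ) - 1) = C (1/2:ℚ) * X := by
    rw [← map_one (rescale (1/2:ℚ)), ← map_sub, ← map_mul, hB0, rescale_X]
  rw [hB]
  linear_combination hB0 + 2 * rescale (1/2:ℚ) (Bs 0) * hu -
    2 * (rescale (1/2:ℚ) (exp ℚ) + 1) * hr - X * (rescale (1/2:ℚ) (exp ℚ) + 1) * hc2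

lemma h43 : Eser * (rescale (4:ℚ) (exp ℚ) - 1) = 2 * rescale (3:ℚ) (exp ℚ) - 2 * exp ℚ := by
  have hv : rescale (2:ℚ) (exp ℚ) * rescale (2:ℚ) (exp ℚ) = rescale (4:ℚ) (exp ℚ) := by
    rw [exp_mul_exp_eq_exp_add]; norm_num
  have hw : exp ℚ * rescale (2:ℚ) (exp ℚ) = rescale (3:ℚ) (exp ℚ) := by
    nth_rewrite 1 [← rexp1]
    rw [exp_mul_exp_eq_exp_add]; norm_num
  linear_combination (rescale (2:ℚ) (exp ℚ) - 1) * hG - Eser * hv + 2 * hw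

lemma hF : rescale (1/4:ℚ) Eser * (exp ℚ - 1)
    = 2 * rescale (3/4:ℚ) (exp ℚ) - 2 * rescale (1/4:ℚ) (exp ℚ) := by
  have h := congrArg (rescale (1/4:ℚ)) h43
  simp only [map_mul, map_sub, map_one, rescale_rescale, map_ofNat] at h
  norm_num [rexp1] at h
  exact h

lemma key3 : Bs (1/4) = rescale (1/2:ℚ) (Bs (1/2)) - C (1/4:ℚ) * X * rescale (1/4:ℚ) Eser := by
  apply mul_right_cancel₀ exp_ne
  have hs : rescale (1/2:ℚ) (Bs (1/2)) * (rescale (1/2:ℚ) (exp ℚ) - 1)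
      = C (1/2:ℚ) * X * rescale (1/4:ℚ) (exp ℚ) := by
    rw [← map_one (rescale (1/2:ℚ)), ← map_sub, ← map_mul, hB (1/2), map_mul, rescale_X,
      rescale_rescale]
    norm_num
  have hqu : rescale (1/4:ℚ) (exp ℚ) * rescale (1/2:ℚ) (exp ℚ) = rescale (3/4:ℚ) (exp ℚ) := by
    rw [exp_mul_exp_eq_exp_add]; norm_num
  rw [hB]
  linear_combination (C (1/4:ℚ)) * X * hF + rescale (1/2:ℚ) (Bs (1/2)) * hu -
    (rescale (1/2:ℚ) (exp ℚ) + 1) * hs - 2 * (C (1/4:ℚ)) * X * hqu -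
    X * rescale (1/4:ℚ) (exp ℚ) * (rescale (1/2:ℚ) (exp ℚ) + 1) * hcc -
    X * rescale (1/4:ℚ) (exp ℚ) * hc4

lemma eulerNumber_odd {n : ℕ} (h : Odd n) : eulerNumber n = 0 := by
  have hco := congrArg (coeff (R := ℚ) n) Eser_neg
  rw [coeff_rescale, Odd.neg_one_pow h] at hco
  have hc0 : coeff (R := ℚ) n Eser = 0 := by linarith
  have h2 := coeff_Eser n
  rw [hc0, eq_comm, div_eq_zero_iff] at h2
  rcases h2 with h2 | h2
  · exact h2
  · exact absurd h2 (by exact_mod_cast n.factorial_ne_zero)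

lemma L1 (k : ℕ) : (Polynomial.bernoulli k).eval (1/2:ℚ) * 2^k = (2 - 2^k) * bernoulli k := by
  have k2 := key2
  rw [show (2:ℚ⟦X⟧) = C (2:ℚ) from (map_ofNat _ 2).symm] at k2
  have h := congrArg (coeff (R := ℚ) k) k2
  rw [coeff_Bs, map_sub, coeff_C_mul, coeff_rescale, coeff_Bs,
    Polynomial.bernoulli_eval_zero] at h
  have hk : ((k ! : ℚ)) ≠ 0 := by exact_mod_cast k.factorial_ne_zero
  have hy : ((2:ℚ))^k ≠ 0 := by positivity
  rw [show ((1:ℚ)/2) = (2:ℚ)⁻¹ by norm_num, inv_pow] at h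
  field_simp at h
  apply mul_right_cancel₀ (show ((k ! : ℚ))^2 ≠ 0 from pow_ne_zero 2 hk)
  linear_combination (↑k ! : ℚ)^2 * h

lemma L2 (k : ℕ) : (Polynomial.bernoulli (k+1)).eval (1/4:ℚ) * 4^(k+1)
    = 2^(k+1) * (Polynomial.bernoulli (k+1)).eval (1/2:ℚ) - (k+1) * eulerNumber k := by
  have h := congrArg (coeff (R := ℚ) (k+1)) key3
  rw [mul_assoc, coeff_Bs, map_sub, coeff_rescale, coeff_Bs, coeff_C_mul,
    coeff_succ_X_mul, coeff_rescale, coeff_Eser] at h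
  have hk : ((k ! : ℚ)) ≠ 0 := by exact_mod_cast k.factorial_ne_zero
  have hk1 : (((k+1) ! : ℚ)) ≠ 0 := by exact_mod_cast (k+1).factorial_ne_zero
  have hfac : (((k+1) ! : ℚ)) = (k+1) * k ! := by
    rw [Nat.factorial_succ]; push_cast; ring
  have hy : ((2:ℚ))^k ≠ 0 := by positivity
  have hy4 : ((4:ℚ))^k ≠ 0 := by positivity
  have hk1' : ((k:ℚ)+1) ≠ 0 := by positivity
  rw [show ((1:ℚ)/2) = (2:ℚ)⁻¹ by norm_num, show ((1:ℚ)/4) = (4:ℚ)⁻¹ by norm_num,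
    inv_pow, hfac] at h
  field_simp at h
  rw [show ((1:ℚ)/4)^k = ((2:ℚ)^k)⁻¹ * ((2:ℚ)^k)⁻¹ by rw [← mul_inv, ← mul_pow, one_div, inv_pow]; norm_num] at h
  rw [show (4:ℚ)^(k+1) = 2^(k+1)*2^(k+1) by rw [← mul_pow]; norm_num]
  field_simp at h
  apply mul_right_cancel₀ (show (2:ℚ) * 2^k ≠ 0 by positivity)
  linear_combination h

lemma cCoeff_eq (n : ℕ) (hn : 1 ≤ n) : cCoeff n = -aCoeff (n+1) / n := by
  have hn0 : ((n:ℚ)) ≠ 0 := Nat.cast_ne_zero.mpr (by omega)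
  have hn1 : ((n:ℚ)+1) ≠ 0 := by positivity
  have hx : (2:ℚ)^n ≠ 0 := by positivity
  have p4 : (4:ℚ)^n = ((2:ℚ)^n)^2 := by
    rw [show (4:ℚ) = 2^2 by norm_num, ← pow_mul, mul_comm, pow_mul]
  have pq : ((1:ℚ)/4)^n = (((2:ℚ)^n)^2)⁻¹ := by
    rw [one_div, inv_pow, p4]
  have h54 : (Polynomial.bernoulli (n+1)).eval (5/4:ℚ)
      = (Polynomial.bernoulli (n+1)).eval (1/4:ℚ) + ((n:ℚ)+1) * (((2:ℚ)^n)^2)⁻¹ := by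
    have h := Polynomial.bernoulli_eval_one_add (n+1) (1/4:ℚ)
    rw [show ((1:ℚ) + 1/4) = 5/4 by norm_num] at h
    rw [h, Nat.add_sub_cancel, pq]
    push_cast
    ring
  have l1 := L1 (n+1)
  have l2 := L2 n
  simp only [pow_succ] at l1 l2
  rw [p4] at l2
  rw [cCoeff, aCoeff, h54]
  rcases Nat.even_or_odd n with he | ho
  · -- n even, so n ≥ 2 and n+1 odd
    have hn2 : 2 ≤ n := by rcases he with ⟨m, hm⟩; omega
    have hodd : Odd (n+1) := Even.add_one he
    have hbz : bernoulli (n+1) = 0 := by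
      rw [bernoulli_eq_bernoulli'_of_ne_one (by omega)]
      exact bernoulli'_eq_zero_of_odd hodd (by omega)
    have he12 : (Polynomial.bernoulli (n+1)).eval (1/2:ℚ) = 0 := by
      rw [hbz, mul_zero] at l1
      exact (mul_eq_zero.mp l1).resolve_right (by positivity)
    rw [he12, mul_zero, zero_sub] at l2
    rw [if_neg (by simpa using hodd), Nat.add_sub_cancel, Odd.neg_one_pow hodd]
    simp only [pow_succ]
    field_simp
    linear_combination -l2
  · -- n odd, n+1 even
    have hev : Even (n+1) := Odd.add_one ho
    have hE : eulerNumber n = 0 := eulerNumber_odd ho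
    have hz : (2:ℚ) ^ ((1:ℤ) - ((n+1 : ℕ) : ℤ)) = ((2:ℚ)^n)⁻¹ := by
      push_cast
      rw [show (1:ℤ) - ((n:ℤ)+1) = -(n:ℤ) by ring, zpow_neg, zpow_natCast]
    rw [hE, mul_zero, sub_zero] at l2
    rw [if_pos hev, Even.neg_one_pow hev, hz]
    push_cast
    field_simp
    linear_combination (l1 + l2) / 2


lemma b2 : bernoulli 2 = 1/6 := by
  rw [bernoulli_eq_bernoulli'_of_ne_one (by norm_num), bernoulli'_two]

lemma b3 : bernoulli 3 = 0 := by
  rw [bernoulli_eq_bernoulli'_of_ne_one (by norm_num)]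
  exact bernoulli'_eq_zero_of_odd ⟨1, by norm_num⟩ (by norm_num)

lemma b4 : bernoulli 4 = -1/30 := by
  rw [bernoulli_eq_bernoulli'_of_ne_one (by norm_num), bernoulli'_four]

lemma b5 : bernoulli 5 = 0 := by
  rw [bernoulli_eq_bernoulli'_of_ne_one (by norm_num)]
  exact bernoulli'_eq_zero_of_odd ⟨2, by norm_num⟩ (by norm_num)

lemma cC1 : cCoeff 1 = -1/48 := by
  rw [cCoeff]
  norm_num [Polynomial.bernoulli, Finset.sum_range_succ, Polynomial.eval_monomial, b2]

lemma cC2 : cCoeff 2 = -9/32 := by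
  rw [cCoeff]
  norm_num [Polynomial.bernoulli, Finset.sum_range_succ, Polynomial.eval_monomial, b2, b3]

lemma cC3 : cCoeff 3 = 7/5760 := by
  rw [cCoeff]
  norm_num [Polynomial.bernoulli, Finset.sum_range_succ, Polynomial.eval_monomial, b2, b3, b4, Nat.choose]

lemma cC4 : cCoeff 4 = -3/256 := by
  rw [cCoeff]
  norm_num [Polynomial.bernoulli, Finset.sum_range_succ, Polynomial.eval_monomial, b2, b3, b4, b5, Nat.choose]

theorem cCoeff_eq_neg_aCoeff_div :
    (∀ n : ℕ, 1 ≤ n → cCoeff n = -aCoeff (n + 1) / n) ∧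
    cCoeff 1 = -1 / 48 ∧ cCoeff 2 = -9 / 32 ∧ cCoeff 3 = 7 / 5760 ∧ cCoeff 4 = -3 / 256 := by
  exact ⟨cCoeff_eq, cC1, cC2, cC3, cC4⟩
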